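/- Let G be a finite connected simple graph with real edge weights that are pairwise distinct, let T be its (unique) minimum spanning tree, and let P be the Prim order of G with an arbitrary seed vertex. Let e_max = (v_i, v_j) be the edge of T of maximum weight, and set P(e_max) = max(P(v_i), P(v_j)). Then deleting e_max from T leaves exactly two connected components T_L and T_R, and their edge sets are E_L = {e ∈ E_T : P(e) < P(e_max)} and E_R = {e ∈ E_T : P(e) > P(e_max)}, where E_T is the edge set of T. -/

import Mathlib

open SimpleGraph

variable {V : Type*}

/-- `P` is a Prim order of the graph `H` restricted to the vertex set `S`, with seed `v₀`:
`P` maps `S` bijectively onto `{1, …, |S|}`, `P v₀ = 1`, and each vertex other than the seed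
is joined to an earlier vertex by an edge of minimum weight among all edges of `H` (within `S`)
from the earlier vertices to the later ones. -/
def IsPrimOrderOn (H : SimpleGraph V) (w : Sym2 V → ℝ)
    (S : Set V) (v₀ : V) (P : V → ℕ) : Prop :=
  v₀ ∈ S ∧ P v₀ = 1 ∧ Set.BijOn P S (Set.Icc 1 S.ncard) ∧
    ∀ v ∈ S, P v ≠ 1 →
      ∃ u ∈ S, P u < P v ∧ H.Adj u v ∧
        ∀ x ∈ S, ∀ y ∈ S, P x < P v → P v ≤ P y → H.Adj x y →
          w s(u, v) ≤ w s(x, y)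

/-- Total edge weight of a graph on a finite vertex type. -/
noncomputable def totalWeight [Fintype V] (H : SimpleGraph V) (w : Sym2 V → ℝ) : ℝ :=
  ∑ e ∈ H.edgeSet.toFinite.toFinset, w e

/-- `H` is a tree on the vertex set `S`: all its edges lie within `S`, any two vertices of `S`
are joined by a path, and `H` is acyclic. -/
def IsTreeOn (H : SimpleGraph V) (S : Set V) : Prop :=
  (∀ e ∈ H.edgeSet, ∀ v ∈ e, v ∈ S) ∧ (∀ u ∈ S, ∀ v ∈ S, H.Reachable u v) ∧ H.IsAcyclic

/-- `T` is a minimum spanning tree of `G` on the vertex set `S`. -/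
def IsMSTOn [Fintype V] (G : SimpleGraph V) (w : Sym2 V → ℝ) (S : Set V)
    (T : SimpleGraph V) : Prop :=
  T ≤ G ∧ IsTreeOn T S ∧
    ∀ T' : SimpleGraph V, T' ≤ G → IsTreeOn T' S → totalWeight T w ≤ totalWeight T' w

/-- Restriction of a graph to the edges with both endpoints in `S`. -/
def restrictTo (H : SimpleGraph V) (S : Set V) : SimpleGraph V where
  Adj a b := H.Adj a b ∧ a ∈ S ∧ b ∈ S
  symm := ⟨fun a b ⟨h, ha, hb⟩ => ⟨h.symm, hb, ha⟩⟩
  loopless := ⟨fun a ⟨h, _, _⟩ => H.irrefl h⟩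

/-- Prim order of an edge: the larger of the Prim orders of its endpoints. -/
def edgeOrder (P : V → ℕ) : Sym2 V → ℕ :=
  Sym2.lift ⟨fun u v => max (P u) (P v), fun u v => max_comm _ _⟩

lemma edgeOrder_mk (P : V → ℕ) (a b : V) : edgeOrder P s(a, b) = max (P a) (P b) := rfl

lemma reachable_of_adj_reachable {T K : SimpleGraph V}
    (h : ∀ a b : V, T.Adj a b → K.Reachable a b) {u v : V} (r : T.Reachable u v) :
    K.Reachable u v := by
  obtain ⟨p⟩ := r
  induction p with
  | nil => exact Reachable.refl _
  | cons ha q ih => exact (h _ _ ha).trans ih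

lemma walk_crosses {G : SimpleGraph V} {S : Set V} {u v : V} (p : G.Walk u v)
    (hp : p.IsTrail) (hu : u ∈ S) (hv : v ∉ S) :
    ∃ x y, x ∈ S ∧ y ∉ S ∧ G.Adj x y ∧ s(x, y) ∈ p.edges ∧
      (G.deleteEdges {s(x, y)}).Reachable u x ∧ (G.deleteEdges {s(x, y)}).Reachable y v := by
  induction p with
  | nil => exact absurd hu hv
  | @cons a b c h q ih =>
    rw [SimpleGraph.Walk.isTrail_cons] at hp
    by_cases hb : b ∈ S
    · obtain ⟨x, y, hx, hy, hadj, hmem, r1, r2⟩ := ih hp.1 hb hv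
      refine ⟨x, y, hx, hy, hadj, by simp [hmem], ?_, r2⟩
      have hne : s(a, b) ≠ s(x, y) := fun hh => hp.2 (hh ▸ hmem)
      have : (G.deleteEdges {s(x, y)}).Adj a b := by
        rw [SimpleGraph.deleteEdges_adj]
        exact ⟨h, by simpa using hne⟩
      exact this.reachable.trans r1
    · refine ⟨a, b, hu, hb, h, by simp, Reachable.refl _, ?_⟩
      exact ⟨q.toDeleteEdges {s(a,b)} (fun e he hee => hp.2 (by simpa using hee ▸ he))⟩

lemma mst_cut_property [Fintype V] {G T : SimpleGraph V} {w : Sym2 V → ℝ}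
    (hdistinct : Set.InjOn w G.edgeSet) (hT : IsMSTOn G w Set.univ T)
    {S : Set V} {u v : V} (hu : u ∈ S) (hv : v ∉ S) (huv : G.Adj u v)
    (hmin : ∀ x ∈ S, ∀ y, y ∉ S → G.Adj x y → w s(u, v) ≤ w s(x, y)) :
    s(u, v) ∈ T.edgeSet := by
  classical
  obtain ⟨hTG, ⟨hTedge, hTreach, hTacyc⟩, hTmin⟩ := hT
  by_contra hne
  obtain ⟨p0⟩ := hTreach u trivial v trivial
  set p : T.Path u v := p0.toPath with hpdef
  obtain ⟨x, y, hx, hy, hadj, hmem, r1, r2⟩ :=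
    walk_crosses (p : T.Walk u v) p.2.isTrail hu hv
  have hxyT : s(x, y) ∈ T.edgeSet := (p : T.Walk u v).edges_subset_edgeSet hmem
  have hxyG : s(x, y) ∈ G.edgeSet := edgeSet_mono hTG hxyT
  have huvG : s(u, v) ∈ G.edgeSet := huv
  have hxyne : s(u, v) ≠ s(x, y) := fun hh => hne (hh ▸ hxyT)
  have hlt : w s(u, v) < w s(x, y) := by
    exact lt_of_le_of_ne (hmin x hx y hy (hTG hadj)) (fun hh => hxyne (hdistinct huvG hxyG hh))
  set T' : SimpleGraph V := T.deleteEdges {s(x, y)} ⊔ fromEdgeSet {s(u, v)} with hT'def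
  have hfromle : fromEdgeSet {s(u, v)} ≤ G := by
    intro a b hab
    rw [fromEdgeSet_adj] at hab
    obtain ⟨hab1, -⟩ := hab
    simp only [Set.mem_singleton_iff, Sym2.eq_iff] at hab1
    rcases hab1 with ⟨rfl, rfl⟩ | ⟨rfl, rfl⟩
    · exact huv
    · exact huv.symm
  have hT'G : T' ≤ G := sup_le ((T.deleteEdges_le _).trans hTG) hfromle
  have hedge : T'.edgeSet = (T.edgeSet \ {s(x, y)}) ∪ {s(u, v)} := by
    rw [hT'def, edgeSet_sup, edgeSet_deleteEdges, edgeSet_fromEdgeSet]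
    congr 1
    ext e
    simp only [Set.mem_diff, Set.mem_singleton_iff, Set.mem_setOf_eq, and_iff_left_iff_imp]
    rintro rfl
    simp [huv.ne]
  have hT'uv : T'.Adj u v := by
    rw [hT'def, sup_adj, fromEdgeSet_adj]
    exact Or.inr ⟨rfl, huv.ne⟩
  have hle1 : T.deleteEdges {s(x, y)} ≤ T' := le_sup_left
  have hxy' : T'.Reachable x y :=
    ((r1.symm.mono hle1).trans hT'uv.reachable).trans ((r2.mono hle1).symm)
  have hadjreach : ∀ a b : V, T.Adj a b → T'.Reachable a b := by
    intro a b hab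
    by_cases he : s(a, b) = s(x, y)
    · simp only [Sym2.eq_iff] at he
      rcases he with ⟨rfl, rfl⟩ | ⟨rfl, rfl⟩
      · exact hxy'
      · exact hxy'.symm
    · have : (T.deleteEdges {s(x, y)}).Adj a b := by
        rw [deleteEdges_adj]; exact ⟨hab, by simpa using he⟩
      exact this.reachable.mono hle1
  have hconn' : ∀ a b : V, T'.Reachable a b := fun a b =>
    reachable_of_adj_reachable hadjreach (hTreach a trivial b trivial)
  have hacyc' : T'.IsAcyclic := by
    intro z c hc
    by_cases hcase : s(u, v) ∈ c.edges
    · have := (adj_and_reachable_delete_edges_iff_exists_cycle (G := T')).mpr ⟨z, c, hc, hcase⟩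
      obtain ⟨-, hr⟩ := this
      have hle2 : (T' \ fromEdgeSet {s(u, v)}) ≤ T.deleteEdges {s(x, y)} := by
        intro a b hab
        obtain ⟨hab1, hab2⟩ := hab
        rw [hT'def, sup_adj] at hab1
        rcases hab1 with h1 | h1
        · exact h1
        · exact absurd h1 hab2
      have hr' : (T.deleteEdges {s(x, y)}).Reachable u v := hr.mono hle2
      obtain ⟨q0⟩ := hr'
      have hq0e : ∀ e ∈ q0.edges, e ≠ s(x, y) := by
        intro e hee
        have := q0.edges_subset_edgeSet hee
        rw [edgeSet_deleteEdges] at this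
        simpa using this.2
      set q1 : T.Walk u v := q0.map (Hom.ofLE (T.deleteEdges_le _)) with hq1
      have hq1e : s(x, y) ∉ q1.edges := by
        rw [hq1]
        simp only [Walk.edges_map, List.mem_map]
        rintro ⟨e, he, hee⟩
        exact hq0e e he (by simpa using hee)
      have hq2e : s(x, y) ∉ (q1.toPath : T.Walk u v).edges :=
        fun hh => hq1e (Walk.edges_toPath_subset q1 hh)
      have := hTacyc.path_unique p q1.toPath
      rw [this] at hmem
      exact hq2e hmem
    · have hsub : ∀ e ∈ c.edges, e ∈ T.edgeSet := by
        intro e hee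
        have h1 := c.edges_subset_edgeSet hee
        rw [hedge] at h1
        rcases h1 with h1 | h1
        · exact h1.1
        · exact absurd (Set.mem_singleton_iff.mp h1 ▸ hee) hcase
      exact hTacyc (c.transfer T hsub) (hc.transfer hsub)
  have htree' : IsTreeOn T' Set.univ :=
    ⟨fun e _ a _ => trivial, fun a _ b _ => hconn' a b, hacyc'⟩
  have hTle := hTmin T' hT'G htree'
  have hfin : T'.edgeSet.toFinite.toFinset
      = insert s(u, v) ((T.edgeSet.toFinite.toFinset).erase s(x, y)) := by
    ext e
    simp only [Set.Finite.mem_toFinset, Finset.mem_insert, Finset.mem_erase, hedge,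
      Set.mem_union, Set.mem_diff, Set.mem_singleton_iff]
    tauto
  have hsum : totalWeight T' w = totalWeight T w - w s(x, y) + w s(u, v) := by
    rw [totalWeight, hfin, Finset.sum_insert (by
      simp only [Finset.mem_erase, Set.Finite.mem_toFinset]; exact fun h => hne h.2)]
    rw [Finset.sum_erase_eq_sub (by simpa using hxyT)]
    rw [totalWeight]; ring
  rw [hsum] at hTle
  linarith

theorem edge_sets_after_breaking_longest_mst_edge {V : Type*} [Fintype V] (G T : SimpleGraph V) (w : Sym2 V → ℝ)
    (hconn : G.Connected) (hdistinct : Set.InjOn w G.edgeSet)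
    (hT : IsMSTOn G w Set.univ T) (v₀ : V) (P : V → ℕ)
    (hP : IsPrimOrderOn G w Set.univ v₀ P)
    (vi vj : V) (hmem : s(vi, vj) ∈ T.edgeSet)
    (hmax : ∀ e ∈ T.edgeSet, w e ≤ w s(vi, vj)) :
    ∃ cL cR : (T.deleteEdges {s(vi, vj)}).ConnectedComponent,
      cL ≠ cR ∧ (∀ c, c = cL ∨ c = cR) ∧
      (restrictTo (T.deleteEdges {s(vi, vj)}) cL.supp).edgeSet
        = {e ∈ T.edgeSet | edgeOrder P e < edgeOrder P s(vi, vj)} ∧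
      (restrictTo (T.deleteEdges {s(vi, vj)}) cR.supp).edgeSet
        = {e ∈ T.edgeSet | edgeOrder P s(vi, vj) < edgeOrder P e} := by
  classical
  obtain ⟨-, hP1, hPbij, hPmin⟩ := hP
  have hPinj : Function.Injective P := fun a b h => hPbij.injOn trivial trivial h
  have hPge1 : ∀ z : V, 1 ≤ P z := fun z => (hPbij.mapsTo (Set.mem_univ z)).1
  obtain ⟨hTG, ⟨hTedge, hTreach, hTacyc⟩, hTmin⟩ := hT
  -- choose Prim edges, which all belong to T by the cut property
  have key : ∀ z : V, ∃ u : V, P z ≠ 1 →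
      P u < P z ∧ G.Adj u z ∧ s(u, z) ∈ T.edgeSet ∧
      ∀ x y : V, P x < P z → P z ≤ P y → G.Adj x y → w s(u, z) ≤ w s(x, y) := by
    intro z
    by_cases hz : P z = 1
    · exact ⟨z, fun h => absurd hz h⟩
    · obtain ⟨u, -, hlt, hadj, hmin⟩ := hPmin z trivial hz
      have hmin' : ∀ x y : V, P x < P z → P z ≤ P y → G.Adj x y → w s(u, z) ≤ w s(x, y) :=
        fun x y hx hy hxy => hmin x trivial y trivial hx hy hxy
      have hmem' : s(u, z) ∈ T.edgeSet := by
        refine mst_cut_property hdistinct ⟨hTG, ⟨hTedge, hTreach, hTacyc⟩, hTmin⟩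
          (S := {x | P x < P z}) hlt (by simp) hadj ?_
        intro x hx y hy hxy
        exact hmin' x y hx (not_lt.mp hy) hxy
      exact ⟨u, fun _ => ⟨hlt, hadj, hmem', hmin'⟩⟩
  choose u hu using key
  have hult : ∀ z, P z ≠ 1 → P (u z) < P z := fun z hz => (hu z hz).1
  have huadj : ∀ z, P z ≠ 1 → G.Adj (u z) z := fun z hz => (hu z hz).2.1
  have humem : ∀ z, P z ≠ 1 → s(u z, z) ∈ T.edgeSet := fun z hz => (hu z hz).2.2.1
  have humin : ∀ z, P z ≠ 1 → ∀ x y : V, P x < P z → P z ≤ P y → G.Adj x y →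
      w s(u z, z) ≤ w s(x, y) := fun z hz => (hu z hz).2.2.2
  have heo : ∀ z, P z ≠ 1 → edgeOrder P s(u z, z) = P z := by
    intro z hz
    rw [edgeOrder_mk]
    exact max_eq_right (le_of_lt (hult z hz))
  -- counting: every edge of T is a Prim edge
  haveI : Fintype ↑T.edgeSet := (T.edgeSet.toFinite).fintype
  haveI : Nonempty V := hconn.nonempty
  have hTtree : T.IsTree :=
    ⟨⟨fun a b => hTreach a trivial b trivial⟩, hTacyc⟩
  have hcard : T.edgeFinset.card + 1 = Fintype.card V := hTtree.card_edgeFinset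
  set A : Finset V := Finset.univ.filter (fun z => P z ≠ 1) with hA
  have hAv : ∀ z, z ∈ A ↔ P z ≠ 1 := by
    intro z; rw [hA, Finset.mem_filter]; simp
  have hAerase : A = Finset.univ.erase v₀ := by
    ext z
    simp only [hAv, Finset.mem_erase, Finset.mem_univ, and_true]
    constructor
    · rintro h rfl; exact h hP1
    · rintro h h1; exact h (hPinj (h1.trans hP1.symm))
  have hAcard : A.card = Fintype.card V - 1 := by
    rw [hAerase, Finset.card_erase_of_mem (Finset.mem_univ _), Finset.card_univ]
  have hinj : Set.InjOn (fun z => s(u z, z)) ↑A := by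
    intro z hz z' hz' heq
    have hz1 : P z ≠ 1 := (hAv z).mp (Finset.mem_coe.mp hz)
    have hz2 : P z' ≠ 1 := (hAv z').mp (Finset.mem_coe.mp hz')
    have h1 : P z = P z' := by
      have := congrArg (edgeOrder P) heq
      rwa [heo z hz1, heo z' hz2] at this
    exact hPinj h1
  have hsubset : A.image (fun z => s(u z, z)) ⊆ T.edgeFinset := by
    intro e he
    obtain ⟨z, hz, rfl⟩ := Finset.mem_image.mp he
    exact mem_edgeFinset.mpr (humem z ((hAv z).mp hz))
  have himcard : (A.image (fun z => s(u z, z))).card = T.edgeFinset.card := by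
    rw [Finset.card_image_of_injOn hinj, hAcard]
    omega
  have himeq : A.image (fun z => s(u z, z)) = T.edgeFinset :=
    Finset.eq_of_subset_of_card_le hsubset (le_of_eq himcard.symm)
  have hsurj : ∀ e ∈ T.edgeSet, ∃ z, P z ≠ 1 ∧ s(u z, z) = e := by
    intro e he
    have : e ∈ A.image (fun z => s(u z, z)) := by
      rw [himeq]; exact mem_edgeFinset.mpr he
    obtain ⟨z, hz, hze⟩ := Finset.mem_image.mp this
    exact ⟨z, (hAv z).mp hz, hze⟩
  -- the top endpoint b of the max edge
  obtain ⟨b, hb1, hbe⟩ := hsurj s(vi, vj) hmem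
  have hm : edgeOrder P s(vi, vj) = P b := by rw [← hbe, heo b hb1]
  have hb2 : 1 < P b := lt_of_le_of_ne (hPge1 b) (Ne.symm hb1)
  -- edges with order above m have both endpoints at or above m
  have hcross : ∀ z, P z ≠ 1 → P b < P z → P b ≤ P (u z) := by
    intro z hz hbz
    by_contra hlt
    push_neg at hlt
    have h1 : w s(u b, b) ≤ w s(u z, z) :=
      humin b hb1 (u z) z hlt (le_of_lt hbz) (huadj z hz)
    have h2 : w s(u z, z) ≤ w s(u b, b) := by
      rw [hbe]; exact hmax _ (humem z hz)
    have heq : s(u z, z) = s(u b, b) :=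
      hdistinct (edgeSet_mono hTG (humem z hz)) (edgeSet_mono hTG (humem b hb1))
        (le_antisymm h2 h1)
    have : P z = P b := by
      have := congrArg (edgeOrder P) heq
      rwa [heo z hz, heo b hb1] at this
    exact absurd this (by omega)
  set D : SimpleGraph V := T.deleteEdges {s(vi, vj)} with hD
  have hzneb : ∀ z, P z ≠ 1 → z ≠ b → s(u z, z) ≠ s(vi, vj) := by
    intro z hz hzb heq
    apply hzb
    apply hPinj
    have := congrArg (edgeOrder P) (heq.trans hbe.symm)
    rwa [heo z hz, heo b hb1] at this
  have hDadj : ∀ z, P z ≠ 1 → z ≠ b → D.Adj (u z) z := by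
    intro z hz hzb
    rw [hD, deleteEdges_adj]
    exact ⟨T.mem_edgeSet.mp (humem z hz), by simpa using hzneb z hz hzb⟩
  -- reachability within each side
  have hLv : ∀ k z, P z = k → P z < P b → D.Reachable z v₀ := by
    intro k
    induction k using Nat.strong_induction_on with
    | _ k ih =>
      intro z hzk hzb
      by_cases h1 : P z = 1
      · have : z = v₀ := hPinj (h1.trans hP1.symm)
        exact this ▸ Reachable.refl _
      · have hzb' : z ≠ b := fun hh => by subst hh; omega
        exact ((hDadj z h1 hzb').reachable.symm).trans
          (ih (P (u z)) (hzk ▸ hult z h1) (u z) rfl ((hult z h1).trans hzb))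
  have hRv : ∀ k z, P z = k → P b ≤ P z → D.Reachable z b := by
    intro k
    induction k using Nat.strong_induction_on with
    | _ k ih =>
      intro z hzk hbz
      rcases eq_or_lt_of_le hbz with heq | hlt
      · have : z = b := hPinj heq.symm
        exact this ▸ Reachable.refl _
      · have h1 : P z ≠ 1 := by omega
        have hub := hcross z h1 hlt
        exact ((hDadj z h1 (fun hh => by subst hh; omega)).reachable.symm).trans
          (ih (P (u z)) (hzk ▸ hult z h1) (u z) rfl hub)
  -- each edge of D lies within one side
  have hside : ∀ p q : V, D.Adj p q →
      (P p < P b ∧ P q < P b) ∨ (P b ≤ P p ∧ P b ≤ P q) := by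
    intro p q hpq
    have hTe : s(p, q) ∈ T.edgeSet := T.mem_edgeSet.mpr ((T.deleteEdges_le _) hpq)
    have hne : s(p, q) ≠ s(vi, vj) := by
      intro hh
      rw [hD, deleteEdges_adj] at hpq
      exact hpq.2 (by simpa using hh)
    obtain ⟨z, hz, hze⟩ := hsurj s(p, q) hTe
    have hzb : z ≠ b := fun hh => hne (by rw [← hze, hh, hbe])
    have hcases : (p = u z ∧ q = z) ∨ (p = z ∧ q = u z) := by
      have := hze.symm
      rwa [Sym2.eq_iff] at this
    rcases lt_trichotomy (P z) (P b) with h | h | h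
    · left
      rcases hcases with ⟨rfl, rfl⟩ | ⟨rfl, rfl⟩
      · exact ⟨(hult _ hz).trans h, h⟩
      · exact ⟨h, (hult _ hz).trans h⟩
    · exact absurd (hPinj h) hzb
    · right
      rcases hcases with ⟨rfl, rfl⟩ | ⟨rfl, rfl⟩
      · exact ⟨hcross _ hz h, le_of_lt h⟩
      · exact ⟨le_of_lt h, hcross _ hz h⟩
  have hLclosed : ∀ p q : V, D.Reachable p q → P p < P b → P q < P b := by
    have hwk : ∀ p q : V, ∀ _ : D.Walk p q, P p < P b → P q < P b := by
      intro p q wk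
      induction wk with
      | nil => exact id
      | cons ha _ ih =>
        intro hpa
        refine ih ?_
        rcases hside _ _ ha with h | h
        · exact h.2
        · omega
    exact fun p q hr => hr.elim (hwk p q)
  have hRclosed : ∀ p q : V, D.Reachable p q → P b ≤ P p → P b ≤ P q := by
    intro p q hr hp
    by_contra hq
    push_neg at hq
    have := hLclosed q p hr.symm hq
    omega
  -- the two components
  refine ⟨D.connectedComponentMk (u b), D.connectedComponentMk b, ?_, ?_, ?_, ?_⟩
  · intro hh
    rw [ConnectedComponent.eq] at hh
    have := hLclosed (u b) b hh (hult b hb1)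
    omega
  · intro c
    obtain ⟨z, rfl⟩ := c.exists_rep
    rcases lt_or_ge (P z) (P b) with h | h
    · left
      show D.connectedComponentMk z = D.connectedComponentMk (u b)
      rw [ConnectedComponent.eq]
      exact (hLv (P z) z rfl h).trans (hLv (P (u b)) (u b) rfl (hult b hb1)).symm
    · right
      show D.connectedComponentMk z = D.connectedComponentMk b
      rw [ConnectedComponent.eq]
      exact hRv (P z) z rfl h
  · ext e
    induction e using Sym2.ind with
    | _ p q =>
      simp only [mem_edgeSet, Set.mem_setOf_eq, Set.mem_sep_iff, hm, edgeOrder_mk]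
      constructor
      · rintro ⟨hDpq, hp, hq⟩
        rw [ConnectedComponent.mem_supp_iff, ConnectedComponent.eq] at hp hq
        refine ⟨T.mem_edgeSet.mpr ((T.deleteEdges_le _) hDpq), ?_⟩
        have h1 : P p < P b := hLclosed (u b) p hp.symm (hult b hb1)
        have h2 : P q < P b := hLclosed (u b) q hq.symm (hult b hb1)
        exact max_lt h1 h2
      · rintro ⟨hTe, hord⟩
        have hp : P p < P b := lt_of_le_of_lt (le_max_left _ _) hord
        have hq : P q < P b := lt_of_le_of_lt (le_max_right _ _) hord
        have hne : s(p, q) ≠ s(vi, vj) := by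
          intro hh
          have := congrArg (edgeOrder P) hh
          rw [edgeOrder_mk, hm] at this
          omega
        have hDpq : D.Adj p q := by
          rw [hD, deleteEdges_adj]
          exact ⟨T.mem_edgeSet.mp hTe, by simpa using hne⟩
        refine ⟨hDpq, ?_, ?_⟩
        · rw [ConnectedComponent.mem_supp_iff, ConnectedComponent.eq]
          exact (hLv (P p) p rfl hp).trans (hLv (P (u b)) (u b) rfl (hult b hb1)).symm
        · rw [ConnectedComponent.mem_supp_iff, ConnectedComponent.eq]
          exact (hLv (P q) q rfl hq).trans (hLv (P (u b)) (u b) rfl (hult b hb1)).symm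
  · ext e
    induction e using Sym2.ind with
    | _ p q =>
      simp only [mem_edgeSet, Set.mem_setOf_eq, Set.mem_sep_iff, hm, edgeOrder_mk]
      constructor
      · rintro ⟨hDpq, hp, hq⟩
        rw [ConnectedComponent.mem_supp_iff, ConnectedComponent.eq] at hp hq
        have hTe : s(p, q) ∈ T.edgeSet := T.mem_edgeSet.mpr ((T.deleteEdges_le _) hDpq)
        refine ⟨hTe, ?_⟩
        have h1 : P b ≤ P p := hRclosed b p hp.symm le_rfl
        have h2 : P b ≤ P q := hRclosed b q hq.symm le_rfl
        have hne : s(p, q) ≠ s(vi, vj) := by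
          intro hh
          rw [hD, deleteEdges_adj] at hDpq
          exact hDpq.2 (by simpa using hh)
        obtain ⟨z, hz, hze⟩ := hsurj s(p, q) hTe
        have hzb : z ≠ b := fun hh => hne (by rw [← hze, hh, hbe])
        have hzm : P b < P z := by
          have hmax' : edgeOrder P s(p, q) = P z := by rw [← hze, heo z hz]
          rw [edgeOrder_mk] at hmax'
          have : P z ≠ P b := fun hh => hzb (hPinj hh)
          have hge : P b ≤ max (P p) (P q) := le_trans h1 (le_max_left _ _)
          omega
        have hmax' : edgeOrder P s(p, q) = P z := by rw [← hze, heo z hz]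
        rw [edgeOrder_mk] at hmax'
        omega
      · rintro ⟨hTe, hord⟩
        obtain ⟨z, hz, hze⟩ := hsurj s(p, q) hTe
        have hmax' : max (P p) (P q) = P z := by
          have : edgeOrder P s(p, q) = P z := by rw [← hze, heo z hz]
          rwa [edgeOrder_mk] at this
        have hzm : P b < P z := by omega
        have hzb : z ≠ b := fun hh => by subst hh; omega
        have hDz : D.Adj (u z) z := hDadj z hz hzb
        have hub : P b ≤ P (u z) := hcross z hz hzm
        have hcases : (p = u z ∧ q = z) ∨ (p = z ∧ q = u z) := by
          have := hze.symm
          rwa [Sym2.eq_iff] at this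
        have hzsupp : z ∈ (D.connectedComponentMk b).supp := by
          rw [ConnectedComponent.mem_supp_iff, ConnectedComponent.eq]
          exact hRv (P z) z rfl (le_of_lt hzm)
        have husupp : u z ∈ (D.connectedComponentMk b).supp := by
          rw [ConnectedComponent.mem_supp_iff, ConnectedComponent.eq]
          exact hRv (P (u z)) (u z) rfl hub
        rcases hcases with ⟨rfl, rfl⟩ | ⟨rfl, rfl⟩
        · exact ⟨hDz, husupp, hzsupp⟩
        · exact ⟨hDz.symm, hzsupp, husupp⟩
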